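/- Let I ⊂ ℝ be an interval, k ∈ ℕ with k ≥ 1, f ∈ C^k(I), and suppose |f^{(k)}(x)| ≥ σ for all x ∈ I, where σ > 0. Then there exists a constant C depending only on k such that for all ρ > 0, the Lebesgue measure of {x ∈ I : |f(x)| ≤ ρ} is at most C (ρ/σ)^{1/k}. -/

import Mathlib

open Set MeasureTheory Polynomial

section SublevelAux


lemma polyIterDeriv (p : ℝ[X]) (n : ℕ) :
    deriv^[n] (fun x => p.eval x) = fun x => (Polynomial.derivative^[n] p).eval x := by
  induction n with
  | zero => rfl
  | succ n ih =>
    rw [Function.iterate_succ_apply', ih, Function.iterate_succ_apply']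
    funext x
    exact Polynomial.deriv (p := Polynomial.derivative^[n] p)

lemma contDiff_polyeval (p : ℝ[X]) {n : WithTop ℕ∞} : ContDiff ℝ n fun x : ℝ => p.eval x := by
  have h : (fun x : ℝ => p.eval x)
      = fun x => ∑ i ∈ Finset.range (p.natDegree + 1), p.coeff i * x ^ i := by
    funext x; exact p.eval_eq_sum_range x
  rw [h]
  exact ContDiff.sum fun i _ => contDiff_const.mul (contDiff_id.pow i)

lemma contDiffOn_iterDeriv {U : Set ℝ} (hU : IsOpen U) :
    ∀ (m : ℕ) (f : ℝ → ℝ) (n : ℕ), ContDiffOn ℝ (n + m : ℕ) f U → ContDiffOn ℝ n (deriv^[m] f) U := by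
  intro m
  induction m with
  | zero => intro f n h; simpa using h
  | succ m ih =>
    intro f n h
    rw [Function.iterate_succ_apply]
    apply ih
    have h' : ContDiffOn ℝ ((n + m : ℕ) + 1) f U := by
      apply h.of_le; norm_cast
    exact h'.deriv_of_isOpen hU (le_refl _)


lemma iterDeriv_sub {U : Set ℝ} (hU : IsOpen U) (f : ℝ → ℝ) (p : ℝ[X]) :
    ∀ n : ℕ, ContDiffOn ℝ n f U →
      Set.EqOn (deriv^[n] (fun x => f x - p.eval x))
        (fun x => deriv^[n] f x - (Polynomial.derivative^[n] p).eval x) U := by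
  intro n
  induction n with
  | zero => intro _ x _; rfl
  | succ n ih =>
    intro h x hx
    have hev : deriv^[n] (fun x => f x - p.eval x)
        =ᶠ[nhds x] fun y => deriv^[n] f y - (Polynomial.derivative^[n] p).eval y :=
      Filter.eventuallyEq_of_mem (hU.mem_nhds hx) (ih (h.of_le (by norm_cast; omega)))
    rw [Function.iterate_succ_apply', hev.deriv_eq]
    have hdf : DifferentiableAt ℝ (deriv^[n] f) x := by
      have hc : ContDiffOn ℝ (1 : ℕ) (deriv^[n] f) U := by
        apply contDiffOn_iterDeriv hU n f 1
        apply h.of_le; norm_cast; omega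
      have := hc.differentiableOn (by norm_num)
      exact (this x hx).differentiableAt (hU.mem_nhds hx)
    have hdp : DifferentiableAt ℝ (fun y => (Polynomial.derivative^[n] p).eval y) x :=
      (Polynomial.differentiable _).differentiableAt
    rw [deriv_fun_sub hdf hdp]
    rw [show deriv (fun y => (Polynomial.derivative^[n] p).eval y) x
        = (Polynomial.derivative^[n+1] p).eval x by
      rw [Function.iterate_succ_apply']
      exact Polynomial.deriv (p := Polynomial.derivative^[n] p)]
    simp [Function.iterate_succ_apply']

lemma rolle_iter :
    ∀ (n : ℕ) (U : Set ℝ), Convex ℝ U → ∀ g : ℝ → ℝ, ContDiffOn ℝ n g U →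
    ∀ y : ℕ → ℝ, (∀ i, i < n → y i < y (i + 1)) → (∀ i, i ≤ n → y i ∈ U) →
    (∀ i, i ≤ n → g (y i) = 0) →
    ∃ ξ, (ξ ∈ U ∧ (1 ≤ n → ξ ∈ interior U)) ∧ deriv^[n] g ξ = 0 := by
  intro n
  induction n with
  | zero =>
    intro U _ g _ y _ hmem hz
    exact ⟨y 0, ⟨hmem 0 le_rfl, by omega⟩, hz 0 le_rfl⟩
  | succ n ih =>
    intro U hU g hg y hlt hmem hz
    have hrolle : ∀ i : ℕ, i ≤ n → ∃ c ∈ Ioo (y i) (y (i+1)), deriv g c = 0 := by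
      intro i hi
      apply exists_deriv_eq_zero (hlt i (by omega))
      · exact hg.continuousOn.mono (hU.ordConnected.out (hmem i (by omega)) (hmem (i+1) (by omega)))
      · rw [hz i (by omega), hz (i+1) (by omega)]
    have hch : ∀ i : ℕ, ∃ c, i ≤ n → c ∈ Ioo (y i) (y (i+1)) ∧ deriv g c = 0 := by
      intro i
      by_cases hi : i ≤ n
      · obtain ⟨c, hc1, hc2⟩ := hrolle i hi
        exact ⟨c, fun _ => ⟨hc1, hc2⟩⟩
      · exact ⟨0, fun h => absurd h hi⟩
    choose z hzz using hch
    have hIooU : ∀ i, i ≤ n → Ioo (y i) (y (i+1)) ⊆ interior U := by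
      intro i hi
      apply interior_maximal _ isOpen_Ioo
      exact (Set.Ioo_subset_Icc_self).trans (hU.ordConnected.out (hmem i (by omega)) (hmem (i+1) (by omega)))
    have hcd : ContDiffOn ℝ n (deriv g) (interior U) := by
      have h' : ContDiffOn ℝ ((n : ℕ) + 1) g (interior U) := by
        apply (hg.mono interior_subset).of_le; norm_cast
      exact h'.deriv_of_isOpen isOpen_interior (le_refl _)
    obtain ⟨ξ, ⟨hξ1, _⟩, hξ0⟩ := ih (interior U) (hU.interior) (deriv g) hcd z
      (fun i hi => lt_trans ((hzz i (by omega)).1.2) ((hzz (i+1) (by omega)).1.1))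
      (fun i hi => hIooU i hi (hzz i hi).1)
      (fun i hi => (hzz i hi).2)
    exact ⟨ξ, ⟨interior_subset hξ1, fun _ => hξ1⟩, by
      rw [Function.iterate_succ_apply]; exact hξ0⟩


lemma select_points (E : Set ℝ) (n : ℕ) (r : ℝ) (hr : 0 < r)
    (hvol : ENNReal.ofReal r < volume E) :
    ∃ y : ℕ → ℝ, (∀ i, i ≤ n → y i ∈ E) ∧
      ∀ i, i < n → y i + r / (2 * n + 2) ≤ y (i + 1) := by
  -- Step 1: truncate E
  have hU : (⋃ m : ℕ, E ∩ Icc (-(m : ℝ)) m) = E := by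
    apply Subset.antisymm (iUnion_subset fun m => inter_subset_left)
    intro x hx
    refine mem_iUnion.mpr ⟨⌈|x|⌉₊, hx, ?_, ?_⟩
    · have h1 := Nat.le_ceil |x|
      have h2 := neg_abs_le x
      linarith
    · have h1 := Nat.le_ceil |x|
      have h2 := le_abs_self x
      linarith
  have hmonoU : Monotone fun m : ℕ => E ∩ Icc (-(m : ℝ)) m := by
    intro a b hab
    apply inter_subset_inter_right
    apply Icc_subset_Icc
    · simp only [neg_le_neg_iff]; exact_mod_cast hab
    · exact_mod_cast hab
  have hiSup := hmonoU.measure_iUnion (μ := volume)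
  rw [hU] at hiSup
  rw [hiSup] at hvol
  obtain ⟨N, hN⟩ := lt_iSup_iff.mp hvol
  set E' := E ∩ Icc (-(N : ℝ)) N with hE'
  have hfin : volume E' ≠ ⊤ :=
    ne_top_of_le_ne_top (measure_Icc_lt_top (a := (-(N:ℝ))) (b := (N:ℝ))).ne
      (measure_mono inter_subset_right)
  set F : ℝ → ℝ := fun x => (volume (E' ∩ Iic x)).toReal with hF
  have hfin' : ∀ x, volume (E' ∩ Iic x) ≠ ⊤ := fun x =>
    ne_top_of_le_ne_top hfin (measure_mono inter_subset_left)
  have hFmono : Monotone F := by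
    intro a b hab
    exact (ENNReal.toReal_le_toReal (hfin' a) (hfin' b)).mpr
      (measure_mono (inter_subset_inter_right _ (Iic_subset_Iic.mpr hab)))
  have hFlip : ∀ a b : ℝ, a ≤ b → F b ≤ F a + (b - a) := by
    intro a b hab
    have hsub : E' ∩ Iic b ⊆ (E' ∩ Iic a) ∪ Ioc a b := by
      rintro x ⟨hxE, hxb⟩
      rcases le_or_gt x a with h | h
      · exact Or.inl ⟨hxE, h⟩
      · exact Or.inr ⟨h, hxb⟩
    have h1 : volume (E' ∩ Iic b) ≤ volume (E' ∩ Iic a) + ENNReal.ofReal (b - a) := by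
      refine (measure_mono hsub).trans ((measure_union_le _ _).trans ?_)
      rw [Real.volume_Ioc]
    calc F b ≤ (volume (E' ∩ Iic a) + ENNReal.ofReal (b - a)).toReal := by
          apply (ENNReal.toReal_le_toReal (hfin' b) _).mpr h1
          exact ENNReal.add_ne_top.mpr ⟨hfin' a, ENNReal.ofReal_ne_top⟩
      _ = F a + (b - a) := by
          rw [ENNReal.toReal_add (hfin' a) ENNReal.ofReal_ne_top,
            ENNReal.toReal_ofReal (by linarith)]
  have hFcont : Continuous F := by
    apply (LipschitzWith.of_dist_le_mul (K := 1) ?_).continuous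
    intro a b
    rw [Real.dist_eq, Real.dist_eq, NNReal.coe_one, one_mul, abs_sub_le_iff]
    rcases le_total a b with h | h
    · constructor
      · have := hFmono h; have := abs_nonneg (a - b); linarith
      · have := hFlip a b h; have h2 : a - b ≤ |a - b| := le_abs_self _
        have h3 : -(a-b) ≤ |a - b| := neg_le_abs _
        linarith
    · constructor
      · have := hFlip b a h; have h3 : a - b ≤ |a - b| := le_abs_self _; linarith
      · have := hFmono h; have := abs_nonneg (a - b); linarith
  have hF0 : F (-(N : ℝ)) = 0 := by
    have hsub : E' ∩ Iic (-(N : ℝ)) ⊆ {(-(N : ℝ))} := by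
      rintro x ⟨⟨_, hx1, _⟩, hxle⟩
      exact le_antisymm hxle hx1
    have h0 : volume (E' ∩ Iic (-(N : ℝ))) = 0 :=
      le_antisymm ((measure_mono hsub).trans_eq Real.volume_singleton) zero_le
    simp only [hF, h0, ENNReal.toReal_zero]
  have hFN : r < F (N : ℝ) := by
    have hEq : E' ∩ Iic (N : ℝ) = E' := inter_eq_left.mpr fun x hx => hx.2.2
    have : ENNReal.ofReal r < volume (E' ∩ Iic (N:ℝ)) := by rw [hEq]; exact hN
    have h2 := ENNReal.toReal_lt_toReal (ENNReal.ofReal_ne_top) (hfin' (N:ℝ)) |>.mpr this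
    rwa [ENNReal.toReal_ofReal hr.le] at h2
  set g := r / (2 * (n : ℝ) + 2) with hg
  have hgpos : 0 < g := by positivity
  have hgr : (2 * (n : ℝ) + 2) * g = r := by
    rw [hg]; field_simp
  -- Step 3: select x i with F (x i) = (i+1) * g
  have hex : ∀ i : ℕ, ∃ x, i ≤ 2 * n + 1 → x ∈ Icc (-(N : ℝ)) N ∧ F x = ((i : ℝ) + 1) * g := by
    intro i
    by_cases hi : i ≤ 2 * n + 1
    · have hmem : ((i : ℝ) + 1) * g ∈ Icc (F (-(N : ℝ))) (F N) := by
        rw [hF0]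
        constructor
        · positivity
        · have h1 : ((i : ℝ) + 1) * g ≤ (2 * (n : ℝ) + 2) * g := by
            have : ((i : ℝ) + 1) ≤ 2 * (n : ℝ) + 2 := by exact_mod_cast Nat.succ_le_succ (le_trans hi (by omega))
            nlinarith
          linarith
      have hNN : -(N : ℝ) ≤ N := by
        have : (0:ℝ) ≤ N := Nat.cast_nonneg N
        linarith
      obtain ⟨x, hx1, hx2⟩ := intermediate_value_Icc hNN hFcont.continuousOn hmem
      exact ⟨x, fun _ => ⟨hx1, hx2⟩⟩
    · exact ⟨0, fun h => absurd h hi⟩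
  choose x hx using hex
  have hxgap : ∀ i : ℕ, i + 1 ≤ 2 * n + 1 → x i + g ≤ x (i + 1) := by
    intro i hi
    obtain ⟨hm1, hv1⟩ := hx i (by omega)
    obtain ⟨hm2, hv2⟩ := hx (i + 1) hi
    have hlt : x i < x (i + 1) := by
      by_contra hle
      push_neg at hle
      have := hFmono hle
      rw [hv1, hv2] at this
      push_cast at this
      nlinarith
    have := hFlip (x i) (x (i + 1)) hlt.le
    rw [hv1, hv2] at this
    push_cast at this
    linarith
  -- Step 4: select y j ∈ E' between x (2j) and x (2j+1)
  have hey : ∀ j : ℕ, ∃ yv, j ≤ n → yv ∈ E' ∧ x (2 * j) < yv ∧ yv ≤ x (2 * j + 1) := by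
    intro j
    by_cases hj : j ≤ n
    · by_contra hno
      push_neg at hno
      obtain ⟨hm1, hv1⟩ := hx (2 * j) (by omega)
      obtain ⟨hm2, hv2⟩ := hx (2 * j + 1) (by omega)
      have hsub : E' ∩ Iic (x (2 * j + 1)) ⊆ E' ∩ Iic (x (2 * j)) := by
        rintro z ⟨hz1, hz2⟩
        refine ⟨hz1, ?_⟩
        by_contra hzz
        rw [mem_Iic] at hzz
        push_neg at hzz
        exact absurd hz2 (not_le.mpr ((hno z).2 hz1 hzz))
      have hle : F (x (2 * j + 1)) ≤ F (x (2 * j)) :=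
        (ENNReal.toReal_le_toReal (hfin' _) (hfin' _)).mpr (measure_mono hsub)
      rw [hv1, hv2] at hle
      push_cast at hle
      nlinarith
    · exact ⟨0, fun h => absurd h hj⟩
  choose y hy using hey
  refine ⟨y, fun i hi => ((hy i hi).1).1, ?_⟩
  intro i hi
  obtain ⟨_, _, hyle⟩ := hy i (by omega)
  obtain ⟨_, hygt, _⟩ := hy (i + 1) (by omega)
  have hgap := hxgap (2 * i + 1) (by omega)
  have h2 : (2 : ℝ) * (n : ℝ) + 2 = 2 * ((n:ℕ) : ℝ) + 2 := by norm_num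
  have : x (2 * i + 1) + g ≤ x (2 * i + 2) := hgap
  have hplus : x (2*i+2) = x (2*(i+1)) := by ring_nf
  rw [hplus] at this
  have : y i + g ≤ y (i+1) := by linarith
  calc y i + r / (2 * ↑n + 2) = y i + g := by rw [hg]
    _ ≤ y (i+1) := this


lemma iterDerivative_eq_C (p : ℝ[X]) (k : ℕ) (hdeg : p.natDegree ≤ k) :
    Polynomial.derivative^[k] p = Polynomial.C ((k.factorial : ℝ) * p.coeff k) := by
  ext n
  rw [Polynomial.coeff_iterate_derivative]
  rcases Nat.eq_zero_or_pos n with hn | hn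
  · subst hn
    simp [Nat.descFactorial_self, nsmul_eq_mul]
  · rw [Polynomial.coeff_C, if_neg (by omega)]
    rw [Polynomial.coeff_eq_zero_of_natDegree_lt (by omega)]
    simp

lemma basis_coeff (k : ℕ) (v : ℕ → ℝ) (i : ℕ) (hi : i ∈ Finset.range (k + 1)) :
    (Lagrange.basis (Finset.range (k + 1)) v i).coeff k
      = Lagrange.nodalWeight (Finset.range (k + 1)) v i := by
  have hb : Lagrange.basis (Finset.range (k + 1)) v i
      = Polynomial.C (Lagrange.nodalWeight (Finset.range (k + 1)) v i)
        * Lagrange.nodal ((Finset.range (k + 1)).erase i) v := by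
    rw [Lagrange.basis, Lagrange.nodalWeight, Lagrange.nodal_eq, map_prod,
      ← Finset.prod_mul_distrib]
    exact Finset.prod_congr rfl fun j _ => rfl
  rw [hb, Polynomial.coeff_C_mul]
  have hcard : ((Finset.range (k + 1)).erase i).card = k := by
    rw [Finset.card_erase_of_mem hi, Finset.card_range]
    omega
  have hdeg : (Lagrange.nodal ((Finset.range (k + 1)).erase i) v).natDegree = k := by
    rw [Lagrange.natDegree_nodal, hcard]
  have hmonic := Lagrange.nodal_monic (s := (Finset.range (k + 1)).erase i) (v := v)
  have := hmonic.coeff_natDegree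
  rw [hdeg] at this
  rw [this, mul_one]

lemma interp_coeff (k : ℕ) (v : ℕ → ℝ) (r : ℕ → ℝ) :
    (Lagrange.interpolate (Finset.range (k + 1)) v r).coeff k
      = ∑ i ∈ Finset.range (k + 1), r i * Lagrange.nodalWeight (Finset.range (k + 1)) v i := by
  rw [Lagrange.interpolate_apply, Polynomial.finset_sum_coeff]
  exact Finset.sum_congr rfl fun i hi => by
    rw [Polynomial.coeff_C_mul, basis_coeff k v i hi]


lemma itdw_eq_iter (I : Set ℝ) (f : ℝ → ℝ) (n : ℕ) {x : ℝ} (hx : x ∈ interior I) :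
    iteratedDerivWithin n f I x = deriv^[n] f x := by
  have hset : I =ᶠ[nhds x] interior I := by
    rw [Filter.eventuallyEq_set]
    exact Filter.eventually_of_mem (isOpen_interior.mem_nhds hx)
      fun y hy => ⟨fun _ => hy, fun _ => interior_subset hy⟩
  have h1 : iteratedFDerivWithin ℝ n f I x = iteratedFDerivWithin ℝ n f (interior I) x :=
    iteratedFDerivWithin_congr_set hset n
  have h2 : iteratedFDerivWithin ℝ n f (interior I) x = iteratedFDeriv ℝ n f x :=
    iteratedFDerivWithin_of_isOpen n isOpen_interior hx
  have : iteratedDerivWithin n f I x = iteratedDeriv n f x := by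
    rw [iteratedDerivWithin, iteratedDeriv, h1, h2]
  rw [this, iteratedDeriv_eq_iterate]


end SublevelAux

theorem stmt6 (k : ℕ) (hk : 1 ≤ k) :
    ∃ C > (0:ℝ), ∀ (I : Set ℝ), I.OrdConnected →
      ∀ f : ℝ → ℝ, ContDiffOn ℝ k f I →
      ∀ σ > (0:ℝ), (∀ x ∈ I, σ ≤ |iteratedDerivWithin k f I x|) →
      ∀ ρ > (0:ℝ),
        volume {x ∈ I | |f x| ≤ ρ} ≤ ENNReal.ofReal (C * (ρ / σ) ^ ((1:ℝ) / k)) := by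
  refine ⟨(k.factorial : ℝ) * ((k : ℝ) + 1) * (2 * (k : ℝ) + 2) ^ k, by positivity, ?_⟩
  intro I hI f hf σ hσ hder ρ hρ
  set A : ℝ := (k.factorial : ℝ) * ((k : ℝ) + 1) * (2 * (k : ℝ) + 2) ^ k with hA
  have hApos : 0 < A := by positivity
  have hA1 : 1 ≤ A := by
    have h1 : (1:ℝ) ≤ (k.factorial : ℝ) := by exact_mod_cast k.factorial_pos
    have h2 : (1:ℝ) ≤ (k:ℝ) + 1 := by linarith [(Nat.cast_nonneg k : (0:ℝ) ≤ k)]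
    have h3 : (1:ℝ) ≤ (2*(k:ℝ)+2)^k := by
      calc (1:ℝ) = 1^k := (one_pow k).symm
        _ ≤ (2*(k:ℝ)+2)^k := pow_le_pow_left₀ (by norm_num) (by linarith [(Nat.cast_nonneg k : (0:ℝ) ≤ k)]) k
    have h12 : (1:ℝ) ≤ (k.factorial:ℝ) * ((k:ℝ)+1) := by nlinarith
    nlinarith
  set t : ℝ := (ρ / σ) ^ ((1:ℝ)/k) with ht
  have htpos : 0 < t := Real.rpow_pos_of_pos (div_pos hρ hσ) _
  by_contra hcon
  push_neg at hcon
  obtain ⟨r, hr0, hlt1, hlt2⟩ := ENNReal.lt_iff_exists_real_btwn.mp hcon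
  have hrA : A * t < r := by
    rwa [ENNReal.ofReal_lt_ofReal_iff_of_nonneg (by positivity)] at hlt1
  have hrpos : 0 < r := lt_trans (by positivity) hrA
  obtain ⟨y, hyE, hygap⟩ := select_points {x ∈ I | |f x| ≤ ρ} k r hrpos hlt2
  set g := r / (2 * (k:ℝ) + 2) with hgdef
  have hgpos : 0 < g := by positivity
  have hchain : ∀ j i : ℕ, i < j → j ≤ k → y i + g ≤ y j := by
    intro j
    induction j with
    | zero => omega
    | succ j ih =>
      intro i hij hj
      rcases Nat.lt_or_ge i j with h | h
      · have h1 := ih i h (by omega)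
        have h2 := hygap j (by omega)
        linarith
      · have : i = j := by omega
        subst this
        exact hygap i (by omega)
  have hmono : ∀ i j : ℕ, i < j → j ≤ k → y i < y j := by
    intro i j h1 h2; have := hchain j i h1 h2; linarith
  have hinj : Set.InjOn y ↑(Finset.range (k+1)) := by
    intro a ha b hb hab
    simp only [Finset.coe_range, mem_Iio] at ha hb
    by_contra hne
    rcases Nat.lt_or_ge a b with h | h
    · exact absurd hab (ne_of_lt (hmono a b h (by omega)))
    · have h' : b < a := by omega
      exact absurd hab.symm (ne_of_lt (hmono b a h' (by omega)))
  have habs : ∀ i j : ℕ, i ∈ Finset.range (k+1) → j ∈ Finset.range (k+1) → i ≠ j →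
      g ≤ |y i - y j| := by
    intro i j hi hj hne
    rw [Finset.mem_range] at hi hj
    rcases Nat.lt_or_ge i j with h | h
    · have := hchain j i h (by omega)
      rw [abs_sub_comm, abs_of_nonneg (by linarith)]
      linarith
    · have h' : j < i := by omega
      have := hchain i j h' (by omega)
      rw [abs_of_nonneg (by linarith)]
      linarith
  set p := Lagrange.interpolate (Finset.range (k+1)) y (fun i => f (y i)) with hp
  have hconv : Convex ℝ I := convex_iff_ordConnected.mpr hI
  have hCDh : ContDiffOn ℝ k (fun x => f x - p.eval x) I :=
    hf.sub ((contDiff_polyeval p).contDiffOn)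
  have hz : ∀ i, i ≤ k → (fun x => f x - p.eval x) (y i) = 0 := by
    intro i hi
    have hmem : i ∈ Finset.range (k+1) := Finset.mem_range.mpr (by omega)
    have hev := Lagrange.eval_interpolate_at_node (r := fun i => f (y i)) hinj hmem
    simp only [hp, hev, sub_self]
  obtain ⟨ξ, ⟨hξI, hξint'⟩, hξ0⟩ := rolle_iter k I hconv _ hCDh y
    (fun i hik => by linarith [hygap i hik, hgpos])
    (fun i hik => (hyE i hik).1) hz
  have hξint : ξ ∈ interior I := hξint' hk
  have hsubeq := iterDeriv_sub isOpen_interior f p k (hf.mono interior_subset) hξint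
  have hfval : deriv^[k] f ξ = (Polynomial.derivative^[k] p).eval ξ := by
    rw [hξ0] at hsubeq
    have := hsubeq.symm
    simp only at this
    linarith
  have hdegp : p.natDegree ≤ k := by
    by_cases hp0 : p = 0
    · simp [hp0]
    · have hd := Lagrange.degree_interpolate_lt (r := fun i => f (y i)) hinj
      rw [Finset.card_range] at hd
      have := (Polynomial.natDegree_lt_iff_degree_lt hp0).mpr (by exact_mod_cast hd)
      omega
  have hCeq := iterDerivative_eq_C p k hdegp
  have hderval : iteratedDerivWithin k f I ξ = (k.factorial : ℝ) * p.coeff k := by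
    rw [itdw_eq_iter I f k hξint, hfval, hCeq, Polynomial.eval_C]
  have hσle : σ ≤ (k.factorial : ℝ) * |p.coeff k| := by
    have h1 := hder ξ hξI
    rwa [hderval, abs_mul, abs_of_nonneg (by positivity : (0:ℝ) ≤ (k.factorial:ℝ))] at h1
  have hcoeff : p.coeff k = ∑ i ∈ Finset.range (k+1),
      f (y i) * Lagrange.nodalWeight (Finset.range (k+1)) y i := interp_coeff k y _
  have hwbound : ∀ i ∈ Finset.range (k+1),
      |Lagrange.nodalWeight (Finset.range (k+1)) y i| ≤ (g⁻¹) ^ k := by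
    intro i hi
    rw [Lagrange.nodalWeight, Finset.abs_prod]
    have hstep : ∀ j ∈ (Finset.range (k+1)).erase i, |(y i - y j)⁻¹| ≤ g⁻¹ := by
      intro j hj
      obtain ⟨hne, hjs⟩ := Finset.mem_erase.mp hj
      have hg2 := habs i j hi hjs (Ne.symm hne)
      rw [abs_inv]
      exact inv_anti₀ hgpos hg2
    calc ∏ j ∈ (Finset.range (k+1)).erase i, |(y i - y j)⁻¹|
        ≤ ∏ _j ∈ (Finset.range (k+1)).erase i, g⁻¹ :=
          Finset.prod_le_prod (fun j _ => abs_nonneg _) hstep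
      _ = (g⁻¹) ^ k := by
          rw [Finset.prod_const, Finset.card_erase_of_mem hi, Finset.card_range]
          norm_num
  have hfy : ∀ i ∈ Finset.range (k+1), |f (y i)| ≤ ρ := by
    intro i hi
    rw [Finset.mem_range] at hi
    exact (hyE i (by omega)).2
  have hcb : |p.coeff k| ≤ ((k:ℝ) + 1) * ρ * (g⁻¹)^k := by
    rw [hcoeff]
    calc |∑ i ∈ Finset.range (k+1), f (y i) * Lagrange.nodalWeight (Finset.range (k+1)) y i|
        ≤ ∑ i ∈ Finset.range (k+1), |f (y i) * Lagrange.nodalWeight (Finset.range (k+1)) y i| :=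
          Finset.abs_sum_le_sum_abs _ _
      _ ≤ ∑ _i ∈ Finset.range (k+1), ρ * (g⁻¹)^k := by
          apply Finset.sum_le_sum
          intro i hi
          rw [abs_mul]
          exact mul_le_mul (hfy i hi) (hwbound i hi) (abs_nonneg _) hρ.le
      _ = ((k:ℝ)+1) * ρ * (g⁻¹)^k := by
          rw [Finset.sum_const, Finset.card_range]
          push_cast; ring
  have hσ2 : σ * g^k ≤ (k.factorial:ℝ) * ((k:ℝ)+1) * ρ := by
    have hgk : (0:ℝ) < g^k := pow_pos hgpos k
    have h3 : (g⁻¹)^k * g^k = 1 := by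
      rw [← mul_pow, inv_mul_cancel₀ hgpos.ne', one_pow]
    have h2 : σ ≤ (k.factorial:ℝ) * (((k:ℝ)+1) * ρ * (g⁻¹)^k) := by
      calc σ ≤ (k.factorial : ℝ) * |p.coeff k| := hσle
        _ ≤ (k.factorial:ℝ) * (((k:ℝ)+1) * ρ * (g⁻¹)^k) := by
            apply mul_le_mul_of_nonneg_left hcb (by positivity)
    calc σ * g^k ≤ ((k.factorial:ℝ) * (((k:ℝ)+1) * ρ * (g⁻¹)^k)) * g^k := by nlinarith
      _ = (k.factorial:ℝ) * ((k:ℝ)+1) * ρ * ((g⁻¹)^k * g^k) := by ring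
      _ = (k.factorial:ℝ) * ((k:ℝ)+1) * ρ := by rw [h3, mul_one]
  have hrk : r ^ k ≤ A * (ρ / σ) := by
    have h2k : (0:ℝ) < (2*(k:ℝ)+2)^k := by positivity
    have hgk : g ^ k = r^k / (2*(k:ℝ)+2)^k := by rw [hgdef, div_pow]
    rw [hgk] at hσ2
    calc r^k = (σ * (r^k / (2*(k:ℝ)+2)^k)) * (2*(k:ℝ)+2)^k / σ := by field_simp
      _ ≤ ((k.factorial:ℝ)*((k:ℝ)+1)*ρ) * (2*(k:ℝ)+2)^k / σ := by gcongr
      _ = A * (ρ/σ) := by rw [hA]; ring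
  have hfinal : r ≤ A * t := by
    have h1 : r = (r ^ k) ^ ((1:ℝ)/k) := by
      rw [one_div]
      exact (Real.pow_rpow_inv_natCast hrpos.le (by omega)).symm
    have h2 : (r^k) ^ ((1:ℝ)/k) ≤ (A * (ρ/σ)) ^ ((1:ℝ)/k) :=
      Real.rpow_le_rpow (by positivity) hrk (by positivity)
    have h3 : (A * (ρ/σ)) ^ ((1:ℝ)/k) = A ^ ((1:ℝ)/k) * t := by
      rw [ht]; exact Real.mul_rpow hApos.le (by positivity)
    have h4 : A ^ ((1:ℝ)/k) ≤ A := by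
      nth_rewrite 2 [← Real.rpow_one A]
      apply Real.rpow_le_rpow_of_exponent_le hA1
      rw [div_le_one (by exact_mod_cast Nat.pos_of_ne_zero (by omega))]
      exact_mod_cast hk
    calc r = (r^k)^((1:ℝ)/k) := h1
      _ ≤ A^((1:ℝ)/k) * t := by rw [← h3]; exact h2
      _ ≤ A * t := mul_le_mul_of_nonneg_right h4 htpos.le
  linarith
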